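/- Let q ≥ 0 be an integer and r_0 > 0. Let J : [r_0, ∞) → ℝ be continuous with ∫_{r_0}^∞ |J(ρ)| · √(ρ^(2q+2) − r_0^(2q+2)) dρ < ∞, and let H : (r_0, ∞) → ℝ be continuous with H(z) ≥ H_L(z) := (q·(z/r_0)^(2q+2) + 1)/((z/r_0)^(2q+2) − 1) for all z > r_0, and such that ∫_ρ^r (H(z) − 1)/z dz is finite whenever r_0 < ρ ≤ r. Define K(r) = −∫_{r_0}^r ρ² · J(ρ) · exp(−∫_ρ^r (H(z) − 1)/z dz) dρ for r > r_0. Then limsup_{r→∞} r^(q−1) · |K(r)| ≤ ∫_{r_0}^∞ |J(ρ)| · √(ρ^(2q+2) − r_0^(2q+2)) dρ. -/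

import Mathlib

open MeasureTheory


lemma hl_deriv (q : ℕ) (r₀ z : ℝ) (hr₀ : 0 < r₀) (hz : r₀ < z) :
    HasDerivAt (fun z : ℝ => (1/2) * Real.log (z ^ (2*q+2) - r₀ ^ (2*q+2)) - 2 * Real.log z)
      ((((q : ℝ) * (z / r₀) ^ (2*q+2) + 1) / ((z / r₀) ^ (2*q+2) - 1) - 1) / z) z := by
  have hz0 : (0:ℝ) < z := hr₀.trans hz
  have hpow : r₀ ^ (2*q+2) < z ^ (2*q+2) := pow_lt_pow_left₀ hz hr₀.le (by omega)
  have hane : z ^ (2*q+2) - r₀ ^ (2*q+2) ≠ 0 := by linarith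
  have h1 : HasDerivAt (fun z : ℝ => z ^ (2*q+2) - r₀ ^ (2*q+2))
      ((2*q+2 : ℕ) * z ^ (2*q+1)) z := by
    simpa using (hasDerivAt_pow (2*q+2) z).sub_const (r₀ ^ (2*q+2))
  have h2 := (h1.log hane).const_mul (1/2 : ℝ)
  have h3 := (Real.hasDerivAt_log hz0.ne').const_mul (2:ℝ)
  convert h2.sub h3 using 1
  have hune : (z / r₀) ^ (2*q+2) - 1 ≠ 0 := by
    have : (1:ℝ) < (z / r₀) ^ (2*q+2) := one_lt_pow₀ ((one_lt_div hr₀).mpr hz) (by omega)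
    linarith
  have hr0 : r₀ ≠ 0 := hr₀.ne'
  · rfl
  · rfl
  · rfl
  rw [div_pow]
  field_simp
  push_cast
  ring_nf

noncomputable def Gfun (q : ℕ) (r₀ z : ℝ) : ℝ :=
  (1/2) * Real.log (z ^ (2*q+2) - r₀ ^ (2*q+2)) - 2 * Real.log z

lemma hl_cont (q : ℕ) (r₀ : ℝ) (hr₀ : 0 < r₀) :
    ContinuousOn (fun z : ℝ =>
      (((q : ℝ) * (z / r₀) ^ (2*q+2) + 1) / ((z / r₀) ^ (2*q+2) - 1) - 1) / z)
      (Set.Ioi r₀) := by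
  apply ContinuousOn.div
  · apply ContinuousOn.sub _ continuousOn_const
    apply ContinuousOn.div
    · fun_prop
    · fun_prop
    · intro z hz
      have h1 : (1:ℝ) < (z / r₀) ^ (2*q+2) := one_lt_pow₀ ((one_lt_div hr₀).mpr hz) (by omega)
      exact sub_ne_zero.mpr h1.ne'
  · fun_prop
  · intro z hz; exact (hr₀.trans hz).ne'

lemma hl_integral (q : ℕ) (r₀ ρ r : ℝ) (hr₀ : 0 < r₀) (hρ : r₀ < ρ) (hρr : ρ ≤ r) :
    ∫ z in ρ..r,
      (((q : ℝ) * (z / r₀) ^ (2*q+2) + 1) / ((z / r₀) ^ (2*q+2) - 1) - 1) / z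
      = Gfun q r₀ r - Gfun q r₀ ρ := by
  apply intervalIntegral.integral_eq_sub_of_hasDerivAt
  · intro z hz
    rw [Set.uIcc_of_le hρr] at hz
    exact hl_deriv q r₀ z hr₀ (hρ.trans_le hz.1)
  · apply ContinuousOn.intervalIntegrable
    apply (hl_cont q r₀ hr₀).mono
    rw [Set.uIcc_of_le hρr]
    exact fun z hz => hρ.trans_le hz.1

lemma exp_G (q : ℕ) (r₀ z : ℝ) (hr₀ : 0 < r₀) (hz : r₀ < z) :
    Real.exp (Gfun q r₀ z) = Real.sqrt (z ^ (2*q+2) - r₀ ^ (2*q+2)) / z ^ 2 := by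
  have hz0 : (0:ℝ) < z := hr₀.trans hz
  have hpos : 0 < z ^ (2*q+2) - r₀ ^ (2*q+2) := by
    have := pow_lt_pow_left₀ hz hr₀.le (show 2*q+2 ≠ 0 by omega); linarith
  have e1 : Real.exp ((1/2) * Real.log (z ^ (2*q+2) - r₀ ^ (2*q+2)))
      = Real.sqrt (z ^ (2*q+2) - r₀ ^ (2*q+2)) := by
    rw [Real.sqrt_eq_rpow, Real.rpow_def_of_pos hpos, mul_comm]
  have e2 : Real.exp (2 * Real.log z) = z ^ 2 := by
    rw [mul_comm, Real.exp_mul, Real.exp_log hz0, Real.rpow_two]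
  rw [Gfun, Real.exp_sub, e1, e2]

lemma exp_bound (q : ℕ) (r₀ ρ r : ℝ) (hr₀ : 0 < r₀) (hρ : r₀ < ρ) (hρr : ρ ≤ r)
    (H : ℝ → ℝ)
    (hHl : ∀ z ∈ Set.Ioi r₀,
      ((q : ℝ) * (z / r₀) ^ (2 * q + 2) + 1) / ((z / r₀) ^ (2 * q + 2) - 1) ≤ H z)
    (hHint : IntervalIntegrable (fun z => (H z - 1) / z) volume ρ r) :
    Real.exp (-∫ z in ρ..r, (H z - 1) / z)
      ≤ (r ^ 2 / ρ ^ 2) *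
        (Real.sqrt (ρ ^ (2*q+2) - r₀ ^ (2*q+2)) / Real.sqrt (r ^ (2*q+2) - r₀ ^ (2*q+2))) := by
  have hρ0 : (0:ℝ) < ρ := hr₀.trans hρ
  have hr : r₀ < r := hρ.trans_le hρr
  have hcomp : Gfun q r₀ r - Gfun q r₀ ρ ≤ ∫ z in ρ..r, (H z - 1) / z := by
    rw [← hl_integral q r₀ ρ r hr₀ hρ hρr]
    apply intervalIntegral.integral_mono_on hρr _ hHint
    · intro z hz
      have hz1 : r₀ < z := hρ.trans_le hz.1
      have hz0 : (0:ℝ) < z := hr₀.trans hz1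
      gcongr
      exact hHl z hz1
    · apply ContinuousOn.intervalIntegrable
      apply (hl_cont q r₀ hr₀).mono
      rw [Set.uIcc_of_le hρr]
      exact fun z hz => hρ.trans_le hz.1
  calc Real.exp (-∫ z in ρ..r, (H z - 1) / z)
      ≤ Real.exp (Gfun q r₀ ρ - Gfun q r₀ r) := by
        apply Real.exp_le_exp.mpr; linarith
    _ = _ := by
        rw [Real.exp_sub, exp_G q r₀ ρ hr₀ hρ, exp_G q r₀ r hr₀ hr]
        rw [div_div_div_comm]
        ring_nf
        rw [inv_inv]
        ring

lemma K_bound (q : ℕ) (r₀ : ℝ) (hr₀ : 0 < r₀) (J H : ℝ → ℝ)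
    (hJint : IntegrableOn
      (fun ρ : ℝ => |J ρ| * Real.sqrt (ρ ^ (2 * q + 2) - r₀ ^ (2 * q + 2)))
      (Set.Ioi r₀))
    (hHl : ∀ z ∈ Set.Ioi r₀,
      ((q : ℝ) * (z / r₀) ^ (2 * q + 2) + 1) / ((z / r₀) ^ (2 * q + 2) - 1) ≤ H z)
    (hHint : ∀ ρ r : ℝ, r₀ < ρ → ρ ≤ r →
      IntervalIntegrable (fun z => (H z - 1) / z) MeasureTheory.volume ρ r)
    (r : ℝ) (hr : r₀ < r) :
    |∫ ρ in r₀..r, ρ ^ 2 * J ρ * Real.exp (-∫ z in ρ..r, (H z - 1) / z)|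
      ≤ r ^ 2 / Real.sqrt (r ^ (2*q+2) - r₀ ^ (2*q+2)) *
        ∫ ρ in Set.Ioi r₀, |J ρ| * Real.sqrt (ρ ^ (2*q+2) - r₀ ^ (2*q+2)) := by
  set C : ℝ := r ^ 2 / Real.sqrt (r ^ (2*q+2) - r₀ ^ (2*q+2)) with hCdef
  have hC : 0 ≤ C := by positivity
  set g : ℝ → ℝ := fun ρ => C * (|J ρ| * Real.sqrt (ρ ^ (2*q+2) - r₀ ^ (2*q+2))) with hgdef
  have hgint : IntervalIntegrable g volume r₀ r := by
    rw [intervalIntegrable_iff_integrableOn_Ioc_of_le hr.le]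
    exact (hJint.mono_set Set.Ioc_subset_Ioi_self).const_mul C
  have hb : ∀ᵐ t ∂volume.restrict (Set.uIoc r₀ r),
      ‖t ^ 2 * J t * Real.exp (-∫ z in t..r, (H z - 1) / z)‖ ≤ g t := by
    rw [Set.uIoc_of_le hr.le]
    refine (ae_restrict_iff' measurableSet_Ioc).mpr (Filter.Eventually.of_forall ?_)
    intro t ht
    have ht0 : (0:ℝ) < t := hr₀.trans ht.1
    have hexp := exp_bound q r₀ t r hr₀ ht.1 ht.2 H hHl (hHint t r ht.1 ht.2)
    have : ‖t ^ 2 * J t * Real.exp (-∫ z in t..r, (H z - 1) / z)‖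
        = t ^ 2 * |J t| * Real.exp (-∫ z in t..r, (H z - 1) / z) := by
      rw [Real.norm_eq_abs, abs_mul, abs_mul, abs_pow, abs_of_pos ht0,
        Real.abs_exp]
    rw [this, hgdef]
    calc t ^ 2 * |J t| * Real.exp (-∫ z in t..r, (H z - 1) / z)
        ≤ t ^ 2 * |J t| * ((r ^ 2 / t ^ 2) *
          (Real.sqrt (t ^ (2*q+2) - r₀ ^ (2*q+2)) / Real.sqrt (r ^ (2*q+2) - r₀ ^ (2*q+2)))) := by
          apply mul_le_mul_of_nonneg_left hexp (by positivity)
      _ = C * (|J t| * Real.sqrt (t ^ (2*q+2) - r₀ ^ (2*q+2))) := by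
          have hs2 : Real.sqrt (r ^ (2*q+2) - r₀ ^ (2*q+2)) ≠ 0 := by
            have := pow_lt_pow_left₀ hr hr₀.le (show 2*q+2 ≠ 0 by omega)
            exact (Real.sqrt_pos.mpr (by linarith)).ne'
          rw [hCdef]; field_simp
  have h1 := intervalIntegral.norm_integral_le_abs_of_norm_le hb hgint
  rw [Real.norm_eq_abs] at h1
  refine h1.trans ?_
  rw [hgdef, intervalIntegral.integral_const_mul, abs_mul, abs_of_nonneg hC]
  have hI0 : (0:ℝ) ≤ ∫ ρ in r₀..r, |J ρ| * Real.sqrt (ρ ^ (2*q+2) - r₀ ^ (2*q+2)) := by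
    apply intervalIntegral.integral_nonneg hr.le
    intro u hu; positivity
  rw [abs_of_nonneg hI0]
  apply mul_le_mul_of_nonneg_left _ hC
  rw [intervalIntegral.integral_of_le hr.le]
  apply setIntegral_mono_set hJint
  · refine Filter.Eventually.of_forall ?_
    intro u; positivity
  · exact (Set.Ioc_subset_Ioi_self).eventuallyLE

lemma tendsto_coef (q : ℕ) (r₀ : ℝ) (hr₀ : 0 < r₀) :
    Filter.Tendsto (fun r : ℝ =>
      r ^ ((q:ℝ) - 1) * (r ^ 2 / Real.sqrt (r ^ (2*q+2) - r₀ ^ (2*q+2))))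
      Filter.atTop (nhds 1) := by
  have h0 : Filter.Tendsto (fun r : ℝ => r₀ / r) Filter.atTop (nhds 0) :=
    tendsto_const_nhds.div_atTop Filter.tendsto_id
  have h1 : Filter.Tendsto (fun r : ℝ => (r₀ / r) ^ (2*q+2)) Filter.atTop (nhds 0) := by
    simpa using h0.pow (2*q+2)
  have h2 : Filter.Tendsto (fun r : ℝ => (1 - (r₀ / r) ^ (2*q+2))⁻¹) Filter.atTop (nhds 1) := by
    have := ((tendsto_const_nhds.sub h1).inv₀ (by norm_num : (1:ℝ) - 0 ≠ 0))
    simpa using this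
  have h3 : Filter.Tendsto (fun r : ℝ => Real.sqrt ((1 - (r₀ / r) ^ (2*q+2))⁻¹))
      Filter.atTop (nhds (Real.sqrt 1)) := h2.sqrt
  rw [Real.sqrt_one] at h3
  apply h3.congr'
  filter_upwards [Filter.eventually_gt_atTop (max r₀ 1)] with r hr
  have hrr₀ : r₀ < r := (le_max_left _ _).trans_lt hr
  have hr0 : (0:ℝ) < r := lt_of_le_of_lt (by positivity) hr
  have hrn : (0:ℝ) < r ^ (2*q+2) := by positivity
  have hD : (0:ℝ) < r ^ (2*q+2) - r₀ ^ (2*q+2) := by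
    have := pow_lt_pow_left₀ hrr₀ hr₀.le (show 2*q+2 ≠ 0 by omega); linarith
  have e1 : (1 - (r₀ / r) ^ (2*q+2))⁻¹ = r ^ (2*q+2) / (r ^ (2*q+2) - r₀ ^ (2*q+2)) := by
    rw [div_pow, one_sub_div hrn.ne', inv_div]
  have e2 : r ^ ((q:ℝ) - 1) * r ^ 2 = r ^ (q+1 : ℕ) := by
    rw [← Real.rpow_natCast r 2, ← Real.rpow_add hr0, ← Real.rpow_natCast r (q+1)]
    congr 1; push_cast; ring
  have e3 : Real.sqrt (r ^ (2*q+2)) = r ^ (q+1 : ℕ) := by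
    rw [show 2*q+2 = (q+1)*2 by ring, pow_mul, Real.sqrt_sq (by positivity)]
  rw [e1, Real.sqrt_div hrn.le, e3, ← mul_div_assoc, e2]
/-- Asymptotic bound
`limsup_{r→∞} r^(q−1) |K(r)| ≤ ∫_{r₀}^∞ |J(ρ)| √(ρ^(2q+2) − r₀^(2q+2)) dρ` for
`K(r) = −∫_{r₀}^r ρ² J(ρ) exp(−∫_ρ^r (H(z)−1)/z dz) dρ` with `H ≥ H_L`. -/
theorem K_phiphi_limsup_bound
    (q : ℕ) (r₀ : ℝ) (hr₀ : 0 < r₀)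
    (J H : ℝ → ℝ) (hJ : ContinuousOn J (Set.Ici r₀))
    (hJint : IntegrableOn
      (fun ρ : ℝ => |J ρ| * Real.sqrt (ρ ^ (2 * q + 2) - r₀ ^ (2 * q + 2)))
      (Set.Ioi r₀))
    (hH : ContinuousOn H (Set.Ioi r₀))
    (hHl : ∀ z ∈ Set.Ioi r₀,
      ((q : ℝ) * (z / r₀) ^ (2 * q + 2) + 1) / ((z / r₀) ^ (2 * q + 2) - 1) ≤ H z)
    (hHint : ∀ ρ r : ℝ, r₀ < ρ → ρ ≤ r →
      IntervalIntegrable (fun z => (H z - 1) / z) MeasureTheory.volume ρ r)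
    (K : ℝ → ℝ)
    (hK : ∀ r, K r =
      -∫ ρ in r₀..r, ρ ^ 2 * J ρ * Real.exp (-∫ z in ρ..r, (H z - 1) / z)) :
    Filter.limsup (fun r : ℝ => r ^ ((q : ℝ) - 1) * |K r|) Filter.atTop ≤
      ∫ ρ in Set.Ioi r₀, |J ρ| * Real.sqrt (ρ ^ (2 * q + 2) - r₀ ^ (2 * q + 2)) := by
  set I : ℝ := ∫ ρ in Set.Ioi r₀, |J ρ| * Real.sqrt (ρ ^ (2 * q + 2) - r₀ ^ (2 * q + 2)) with hIdef
  set u : ℝ → ℝ := fun r => r ^ ((q : ℝ) - 1) * |K r| with hudef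
  set v : ℝ → ℝ := fun r =>
    (r ^ ((q:ℝ) - 1) * (r ^ 2 / Real.sqrt (r ^ (2*q+2) - r₀ ^ (2*q+2)))) * I with hvdef
  have hvlim : Filter.Tendsto v Filter.atTop (nhds I) := by
    simpa using (tendsto_coef q r₀ hr₀).mul_const I
  have huv : u ≤ᶠ[Filter.atTop] v := by
    filter_upwards [Filter.eventually_gt_atTop (max r₀ 0)] with r hr
    have hrr₀ : r₀ < r := (le_max_left _ _).trans_lt hr
    have hr0 : (0:ℝ) < r := (le_max_right _ _).trans_lt hr
    have hKb : |K r| ≤ r ^ 2 / Real.sqrt (r ^ (2*q+2) - r₀ ^ (2*q+2)) * I := by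
      rw [hK r, abs_neg]
      exact K_bound q r₀ hr₀ J H hJint hHl hHint r hrr₀
    calc u r ≤ r ^ ((q : ℝ) - 1) * (r ^ 2 / Real.sqrt (r ^ (2*q+2) - r₀ ^ (2*q+2)) * I) :=
          mul_le_mul_of_nonneg_left hKb (Real.rpow_nonneg hr0.le _)
      _ = v r := by rw [hvdef]; ring
  have hcob : Filter.IsCoboundedUnder (· ≤ ·) Filter.atTop u := by
    apply Filter.IsBoundedUnder.isCoboundedUnder_le
    refine ⟨0, ?_⟩
    simp only [Filter.eventually_map]
    filter_upwards [Filter.eventually_gt_atTop (0:ℝ)] with r hr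
    simp only [hudef]
    positivity
  calc Filter.limsup u Filter.atTop ≤ Filter.limsup v Filter.atTop :=
        Filter.limsup_le_limsup huv hcob hvlim.isBoundedUnder_le
    _ = I := hvlim.limsup_eq
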